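/- Let f : [0,∞) → ℝ be continuous and m a positive integer. Suppose Σ_{k=0}^{m} C(m,k)·(-1)^(m-k)·f(t + kτ) = 0 for all t ≥ 0 and all τ > 0. Then f is the restriction to [0,∞) of a polynomial of degree less than m. -/

import Mathlib

open Finset Polynomial fwdDiff

private lemma diff_as_fwd (g : ℝ → ℝ) (m : ℕ) (t τ : ℝ) :
    ∑ k ∈ range (m + 1), ((-1 : ℝ)) ^ (m - k) * (m.choose k) * g (t + k * τ)
      = (fwdDiff τ)^[m] g t := by
  rw [fwdDiff_iter_eq_sum_shift]
  refine Finset.sum_congr rfl fun k _ => ?_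
  rw [zsmul_eq_mul, nsmul_eq_mul]
  push_cast
  ring

private lemma poly_fwdDiff_eq_zero (τ : ℝ) :
    ∀ (m : ℕ) (p : Polynomial ℝ), p.degree < m →
      ∀ x : ℝ, (fwdDiff τ)^[m] (fun y => p.eval y) x = 0 := by
  intro m
  induction m with
  | zero =>
      intro p hp x
      have : p = 0 := by
        rw [← Polynomial.degree_eq_bot]
        exact Nat.WithBot.lt_zero_iff.mp (by exact_mod_cast hp)
      simp [this]
  | succ m ih =>
      intro p hp x
      rw [Function.iterate_succ_apply]
      have hfd : fwdDiff τ (fun y => p.eval y) = fun y => (p.comp (X + C τ) - p).eval y := by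
        funext y
        simp [fwdDiff, eval_comp]
      rw [hfd]
      refine ih _ ?_ x
      by_cases h0 : p = 0
      · simp [h0]
      · have hle : (p.natDegree : WithBot ℕ) ≤ (m : WithBot ℕ) := by
          have : p.natDegree < m + 1 := by
            rwa [Polynomial.natDegree_lt_iff_degree_lt h0]
          exact_mod_cast Nat.lt_succ_iff.mp this
        by_cases hz : p.comp (X + C τ) - p = 0
        · rw [hz]
          simp
        · have hnc : (X + C τ : Polynomial ℝ).natDegree = 1 := by
            simp
          have hlc : (p.comp (X + C τ)).leadingCoeff = p.leadingCoeff := by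
            rw [Polynomial.leadingCoeff_comp (by rw [hnc]; norm_num)]
            have : (X + C τ : Polynomial ℝ).leadingCoeff = 1 :=
              (Polynomial.monic_X_add_C τ)
            rw [this, one_pow, mul_one]
          have hc0 : p.comp (X + C τ) ≠ 0 := fun hc => by
            apply h0
            rw [← Polynomial.leadingCoeff_eq_zero, ← hlc, hc, Polynomial.leadingCoeff_zero]
          have hdeg : (p.comp (X + C τ)).degree = p.degree := by
            rw [Polynomial.degree_eq_natDegree hc0, Polynomial.degree_eq_natDegree h0,
              Polynomial.natDegree_comp, hnc, mul_one]
          calc (p.comp (X + C τ) - p).degree < (p.comp (X + C τ)).degree :=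
                Polynomial.degree_sub_lt hdeg hc0 hlc
            _ = (p.natDegree : WithBot ℕ) := by
                rw [hdeg, Polynomial.degree_eq_natDegree h0]
            _ ≤ (m : WithBot ℕ) := hle

theorem stmt_9 (f : ℝ → ℝ) (m : ℕ) (hm : 0 < m)
    (hf : ContinuousOn f (Set.Ici 0))
    (hdiff : ∀ t : ℝ, 0 ≤ t → ∀ τ : ℝ, 0 < τ →
      ∑ k ∈ range (m + 1), ((-1 : ℝ)) ^ (m - k) * (m.choose k) * f (t + k * τ) = 0) :
    ∃ p : Polynomial ℝ, p.degree < m ∧ ∀ t : ℝ, 0 ≤ t → f t = p.eval t := by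
  classical
  set P : ℝ → Polynomial ℝ := fun h =>
    Lagrange.interpolate (range m) (fun k : ℕ => (k : ℝ) * h)
      (fun k : ℕ => f ((k : ℝ) * h)) with hP
  have hinj : ∀ h : ℝ, 0 < h → Set.InjOn (fun k : ℕ => (k : ℝ) * h) (range m) := by
    intro h hh a _ b _ hab
    have : (a : ℝ) = b := mul_right_cancel₀ hh.ne' hab
    exact_mod_cast this
  have hdeg : ∀ h : ℝ, 0 < h → (P h).degree < m := by
    intro h hh
    have := Lagrange.degree_interpolate_lt (fun k : ℕ => f ((k : ℝ) * h)) (hinj h hh)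
    rw [Finset.card_range] at this
    exact this
  have key : ∀ h : ℝ, 0 < h → ∀ j : ℕ, f ((j : ℝ) * h) = (P h).eval ((j : ℝ) * h) := by
    intro h hh j
    induction j using Nat.strong_induction_on with
    | _ j IH =>
      by_cases hj : j < m
      · exact (Lagrange.eval_interpolate_at_node (fun k : ℕ => f ((k : ℝ) * h)) (hinj h hh) (mem_range.mpr hj)).symm
      · push_neg at hj
        obtain ⟨i, rfl⟩ : ∃ i, j = i + m := ⟨j - m, (Nat.sub_add_cancel hj).symm⟩
        have ht : (0 : ℝ) ≤ (i : ℝ) * h := by positivity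
        have h1 := hdiff ((i : ℝ) * h) ht h hh
        have h2 : ∑ k ∈ range (m + 1),
            ((-1 : ℝ)) ^ (m - k) * (m.choose k) * (P h).eval ((i : ℝ) * h + k * h) = 0 := by
          have := poly_fwdDiff_eq_zero h m (P h) (hdeg h hh) ((i : ℝ) * h)
          rw [← diff_as_fwd (fun y => (P h).eval y) m ((i : ℝ) * h) h] at this
          exact this
        have h3 : ∑ k ∈ range (m + 1), ((-1 : ℝ)) ^ (m - k) * (m.choose k) *
            (f ((i : ℝ) * h + k * h) - (P h).eval ((i : ℝ) * h + k * h)) = 0 := by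
          simp only [mul_sub]
          rw [Finset.sum_sub_distrib, h1, h2, sub_zero]
        rw [Finset.sum_range_succ] at h3
        have h4 : ∀ k ∈ range m, ((-1 : ℝ)) ^ (m - k) * (m.choose k) *
            (f ((i : ℝ) * h + k * h) - (P h).eval ((i : ℝ) * h + k * h)) = 0 := by
          intro k hk
          have hk' := mem_range.mp hk
          have hE : (i : ℝ) * h + k * h = ((i + k : ℕ) : ℝ) * h := by push_cast; ring
          rw [hE, ← IH (i + k) (by omega), sub_self, mul_zero]
        rw [Finset.sum_eq_zero h4, zero_add] at h3
        have hE : (i : ℝ) * h + m * h = ((i + m : ℕ) : ℝ) * h := by push_cast; ring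
        rw [hE] at h3
        simp only [Nat.sub_self, pow_zero, Nat.choose_self, Nat.cast_one, one_mul] at h3
        linarith
  have half : ∀ h : ℝ, 0 < h → P h = P (h / 2) := by
    intro h hh
    have hh2 : (0 : ℝ) < h / 2 := by linarith
    have hz : P h - P (h / 2) = 0 := by
      apply Polynomial.eq_zero_of_infinite_isRoot
      apply Set.infinite_of_injective_forall_mem (f := fun j : ℕ => (j : ℝ) * h)
      · intro a b hab
        have : (a : ℝ) = b := mul_right_cancel₀ hh.ne' hab
        exact_mod_cast this
      · intro j
        have e1 := key h hh j
        have e2 := key (h / 2) hh2 (2 * j)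
        have hE : ((2 * j : ℕ) : ℝ) * (h / 2) = (j : ℝ) * h := by push_cast; ring
        rw [hE] at e2
        simp only [Set.mem_setOf_eq, Polynomial.IsRoot, Polynomial.eval_sub]
        rw [← e1, ← e2, sub_self]
    exact sub_eq_zero.mp hz
  have pn : ∀ n : ℕ, P (1 / 2 ^ n) = P 1 := by
    intro n
    induction n with
    | zero => norm_num
    | succ n ih =>
        have h1 : (0 : ℝ) < 1 / 2 ^ n := by positivity
        have hE : (1 : ℝ) / 2 ^ (n + 1) = (1 / 2 ^ n) / 2 := by ring
        rw [hE, ← half _ h1, ih]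
  refine ⟨P 1, hdeg 1 one_pos, ?_⟩
  have dy : ∀ n j : ℕ, f ((j : ℝ) / 2 ^ n) = (P 1).eval ((j : ℝ) / 2 ^ n) := by
    intro n j
    have h1 : (0 : ℝ) < 1 / 2 ^ n := by positivity
    have := key (1 / 2 ^ n) h1 j
    rw [pn n] at this
    have hE : (j : ℝ) * (1 / 2 ^ n) = (j : ℝ) / 2 ^ n := by ring
    rwa [hE] at this
  intro t ht
  set x : ℕ → ℝ := fun n => ((⌈t * 2 ^ n⌉.toNat : ℝ)) / 2 ^ n with hx
  have hcast : ∀ n : ℕ, ((⌈t * 2 ^ n⌉.toNat : ℝ)) = (⌈t * 2 ^ n⌉ : ℝ) := by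
    intro n
    have : (0 : ℝ) ≤ t * 2 ^ n := by positivity
    exact_mod_cast congrArg (Int.cast : ℤ → ℝ) (Int.toNat_of_nonneg (Int.ceil_nonneg this))
  have hxt : ∀ n, t ≤ x n := by
    intro n
    have h2 : (0 : ℝ) < 2 ^ n := by positivity
    rw [hx, le_div_iff₀ h2, hcast n]
    exact Int.le_ceil _
  have hxu : ∀ n, x n ≤ t + 1 / 2 ^ n := by
    intro n
    have h2 : (0 : ℝ) < 2 ^ n := by positivity
    rw [hx, div_le_iff₀ h2, hcast n]
    have := (Int.ceil_lt_add_one (t * 2 ^ n)).le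
    calc (⌈t * 2 ^ n⌉ : ℝ) ≤ t * 2 ^ n + 1 := this
      _ = (t + 1 / 2 ^ n) * 2 ^ n := by field_simp
  have htend : Filter.Tendsto x Filter.atTop (nhds t) := by
    have hub : Filter.Tendsto (fun n : ℕ => t + 1 / 2 ^ n) Filter.atTop (nhds (t + 0)) := by
      refine Filter.Tendsto.const_add t ?_
      have : Filter.Tendsto (fun n : ℕ => ((1 : ℝ) / 2) ^ n) Filter.atTop (nhds 0) :=
        tendsto_pow_atTop_nhds_zero_of_lt_one (by norm_num) (by norm_num)
      simpa [one_div, inv_pow] using this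
    rw [add_zero] at hub
    exact tendsto_of_tendsto_of_tendsto_of_le_of_le tendsto_const_nhds hub hxt hxu
  have htx : Filter.Tendsto x Filter.atTop (nhdsWithin t (Set.Ici 0)) := by
    rw [tendsto_nhdsWithin_iff]
    exact ⟨htend, Filter.Eventually.of_forall fun n => le_trans ht (hxt n)⟩
  have h5 : Filter.Tendsto (fun n => f (x n)) Filter.atTop (nhds (f t)) :=
    Filter.Tendsto.comp (hf t ht) htx
  have h6 : Filter.Tendsto (fun n => (P 1).eval (x n)) Filter.atTop (nhds ((P 1).eval t)) :=
    Filter.Tendsto.comp ((Polynomial.continuous (P 1)).tendsto t) htend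
  have hfx : (fun n => f (x n)) = fun n => (P 1).eval (x n) := by
    funext n
    exact dy n (⌈t * 2 ^ n⌉.toNat)
  rw [hfx] at h5
  exact tendsto_nhds_unique h5 h6
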